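/- (Corollary, forward direction) Suppose sup_N ‖Σ_{n=1}^N Π_{i=1}^H f_i ∘ T_i^n‖_{L^∞(ν)} < ∞, where the n-th summand is F ∘ Φⁿ with F = f₁ ⊗ ⋯ ⊗ f_H. Then there exists V ∈ L^∞(X^H, ν) such that F = V − V ∘ Φ holds ν-a.e. -/

import Mathlib

open MeasureTheory Filter Topology
open scoped ENNReal NNReal

lemma aux_limsup_add_le {u v : ℕ → ℝ} {M : ℝ}
    (hu : ∀ᶠ n in atTop, |u n| ≤ M) (hv : Tendsto v atTop (𝓝 0)) :
    limsup (fun n => u n + v n) atTop ≤ limsup u atTop := by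
  apply le_of_forall_pos_le_add
  intro ε hε
  have hv1 : ∀ᶠ n in atTop, |v n| ≤ ε := by
    have := hv.eventually (Metric.ball_mem_nhds (0:ℝ) hε)
    exact this.mono fun n h => le_of_lt (by simpa [Real.dist_eq] using h)
  have hcb : IsCoboundedUnder (· ≤ ·) atTop (fun n => u n + v n) :=
    isCoboundedUnder_le_of_eventually_le atTop (x := -M - ε)
      ((hu.and hv1).mono fun n ⟨h1, h2⟩ => by
        have := (abs_le.1 h1).1; have := (abs_le.1 h2).1; linarith)
  have hbu : IsBoundedUnder (· ≤ ·) atTop (fun n => u n + ε) :=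
    ⟨M + ε, (hu.mono fun n h => by have := (abs_le.1 h).2; simp; linarith)⟩
  calc limsup (fun n => u n + v n) atTop ≤ limsup (fun n => u n + ε) atTop := by
        apply limsup_le_limsup ((hv1.mono fun n h => by have := (abs_le.1 h).2; linarith)) hcb hbu
    _ = limsup u atTop + ε := by
        apply limsup_add_const atTop u ε ⟨M, hu.mono fun n h => (abs_le.1 h).2⟩
        exact (IsBoundedUnder.isCoboundedUnder_le ⟨-M, hu.mono fun n h => (abs_le.1 h).1⟩)

lemma aux_limsup_add_eq {u v : ℕ → ℝ} {M : ℝ}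
    (hu : ∀ᶠ n in atTop, |u n| ≤ M) (hv : Tendsto v atTop (𝓝 0)) :
    limsup (fun n => u n + v n) atTop = limsup u atTop := by
  refine le_antisymm (aux_limsup_add_le hu hv) ?_
  have hv1 : ∀ᶠ n in atTop, |v n| ≤ 1 := by
    have := hv.eventually (Metric.ball_mem_nhds (0:ℝ) one_pos)
    exact this.mono fun n h => le_of_lt (by simpa [Real.dist_eq] using h)
  have h2 : ∀ᶠ n in atTop, |u n + v n| ≤ M + 1 :=
    (hu.and hv1).mono fun n ⟨h1, h2⟩ => (abs_add_le _ _).trans (add_le_add h1 h2)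
  have := aux_limsup_add_le (u := fun n => u n + v n) (v := fun n => -(v n)) h2
    (by simpa using hv.neg)
  simpa using this

lemma aux_abs_limsup_le {u : ℕ → ℝ} {M : ℝ}
    (hu : ∀ᶠ n in atTop, |u n| ≤ M) : |limsup u atTop| ≤ M := by
  rw [abs_le]
  constructor
  · apply le_limsup_of_frequently_le
    · exact (hu.mono fun n h => (abs_le.1 h).1).frequently
    · exact ⟨M, hu.mono fun n h => (abs_le.1 h).2⟩
  · apply limsup_le_of_le
    · exact (IsBoundedUnder.isCoboundedUnder_le ⟨-M, hu.mono fun n h => (abs_le.1 h).1⟩)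
    · exact hu.mono fun n h => (abs_le.1 h).2

lemma aux_sum_Icc_one (a : ℕ → ℝ) (k : ℕ) :
    ∑ n ∈ Finset.Icc 1 k, a n = ∑ n ∈ Finset.range k, a (n + 1) := by
  rw [Finset.range_eq_Ico, Finset.sum_Ico_add' a 0 k (c := 1)]
  rw [Finset.Ico_add_one_right_eq_Icc]

theorem stmt_9
    {X : Type*} [MeasurableSpace X] (μ : Measure X) [IsProbabilityMeasure μ]
    (H : ℕ) (T : Fin H → Equiv.Perm X)
    (hTm : ∀ i : Fin H, Measurable ⇑(T i))
    (hTm' : ∀ i : Fin H, Measurable ⇑(T i).symm)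
    (hTpres : ∀ i : Fin H, MeasurePreserving (T i) μ μ)
    (μΔ : Measure (Fin H → X))
    (hμΔ : μΔ = Measure.map (fun x => fun _ : Fin H => x) μ)
    (Φ : Equiv.Perm (Fin H → X))
    (hΦ : ∀ (y : Fin H → X) (i : Fin H), Φ y i = T i (y i))
    (hΦmeas : ∀ n : ℤ, Measurable ⇑(Φ ^ n))
    (ν : Measure (Fin H → X))
    (hν : ν = (3 : ℝ≥0∞)⁻¹ •
      Measure.sum (fun n : ℤ => ((2 : ℝ≥0∞) ^ n.natAbs)⁻¹ • Measure.map ⇑(Φ ^ n) μΔ))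
    (f : Fin H → X → ℝ) (hf : ∀ i : Fin H, MemLp (f i) ⊤ μ)
    (F : (Fin H → X) → ℝ) (hF : ∀ y : Fin H → X, F y = ∏ i : Fin H, f i (y i))
    (hsup : (⨆ N : ℕ, eLpNorm (fun z => ∑ n ∈ Finset.Icc 1 N, F ((Φ ^ n) z)) ⊤ ν) < ⊤) :
    ∃ V : (Fin H → X) → ℝ, MemLp V ⊤ ν ∧ ∀ᵐ z ∂ν, F z = V z - V (Φ z) := by
  classical
  -- inverse formula
  have hΦinv : ∀ (y : Fin H → X) (i : Fin H), Φ⁻¹ y i = (T i)⁻¹ (y i) := by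
    intro y i
    apply (T i).injective
    have h1 : T i (Φ⁻¹ y i) = Φ (Φ⁻¹ y) i := (hΦ (Φ⁻¹ y) i).symm
    rw [h1]; simp
  -- zpow formula
  have hpow : ∀ (k : ℤ) (y : Fin H → X) (i : Fin H), (Φ ^ k) y i = ((T i) ^ k) (y i) := by
    intro k
    induction k using Int.induction_on with
    | zero => intro y i; simp
    | succ k ih =>
        intro y i
        have h1 : (Φ ^ ((k : ℤ) + 1)) y = (Φ ^ (k : ℤ)) (Φ y) := by
          rw [zpow_add_one]; rfl
        have h2 : ((T i) ^ ((k : ℤ) + 1)) (y i) = ((T i) ^ (k : ℤ)) (T i (y i)) := by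
          rw [zpow_add_one]; rfl
        rw [h1, h2, ih (Φ y) i, hΦ]
    | pred k ih =>
        intro y i
        have h1 : (Φ ^ (-(k : ℤ) - 1)) y = (Φ ^ (-(k : ℤ))) (Φ⁻¹ y) := by
          rw [zpow_sub_one]; rfl
        have h2 : ((T i) ^ (-(k : ℤ) - 1)) (y i) = ((T i) ^ (-(k : ℤ))) ((T i)⁻¹ (y i)) := by
          rw [zpow_sub_one]; rfl
        rw [h1, h2, ih (Φ⁻¹ y) i, hΦinv]
  -- measure preservation of powers of T i
  have hTinv : ∀ i, MeasurePreserving (⇑(T i)⁻¹) μ μ := by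
    intro i
    exact MeasurePreserving.symm (⟨T i, hTm i, hTm' i⟩ : X ≃ᵐ X) (hTpres i)
  have hTk : ∀ (i : Fin H) (k : ℤ), MeasurePreserving (⇑((T i) ^ k)) μ μ := by
    intro i k
    induction k using Int.induction_on with
    | zero => simpa using MeasurePreserving.id μ
    | succ k ih =>
        have h1 : ⇑((T i) ^ ((k : ℤ) + 1)) = ⇑((T i) ^ (k : ℤ)) ∘ ⇑(T i) := by
          funext x; rw [zpow_add_one]; rfl
        rw [h1]; exact ih.comp (hTpres i)
    | pred k ih =>
        have h1 : ⇑((T i) ^ (-(k : ℤ) - 1)) = ⇑((T i) ^ (-(k : ℤ))) ∘ ⇑(T i)⁻¹ := by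
          funext x; rw [zpow_sub_one]; rfl
        rw [h1]; exact ih.comp (hTinv i)
  -- measurable versions of f i
  set g : Fin H → X → ℝ := fun i => ((hf i).1.mk (f i)) with hg_def
  have hgmeas : ∀ i, Measurable (g i) := fun i => (hf i).1.stronglyMeasurable_mk.measurable
  have hfg : ∀ i, f i =ᵐ[μ] g i := fun i => (hf i).1.ae_eq_mk
  set K : Fin H → ℝ := fun i => (eLpNorm (f i) ⊤ μ).toReal with hK_def
  have hKbound : ∀ i, ∀ᵐ x ∂μ, |f i x| ≤ K i := by
    intro i
    have h1 : ∀ᵐ x ∂μ, (‖f i x‖₊ : ℝ≥0∞) ≤ eLpNormEssSup (f i) μ := ae_le_eLpNormEssSup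
    refine h1.mono fun x hx => ?_
    have h2 : (‖f i x‖₊ : ℝ≥0∞) ≤ eLpNorm (f i) ⊤ μ := by rwa [eLpNorm_exponent_top]
    have h3 : eLpNorm (f i) ⊤ μ ≠ ⊤ := (hf i).2.ne
    calc |f i x| = ((‖f i x‖₊ : ℝ≥0∞)).toReal := by simp [Real.norm_eq_abs]
      _ ≤ K i := ENNReal.toReal_mono h3 h2
  -- the bad sets
  have hSex : ∀ i, ∃ S : Set X, {x | ¬ (f i x = g i x ∧ |f i x| ≤ K i)} ⊆ S ∧
      MeasurableSet S ∧ μ S = 0 := by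
    intro i
    have h0 : μ {x | ¬ (f i x = g i x ∧ |f i x| ≤ K i)} = 0 := by
      have := (hfg i).and (hKbound i)
      simpa [ae_iff] using this
    exact exists_measurable_superset_of_null h0
  choose S hSsub hSmeas hSnull using hSex
  set Bad : Set (Fin H → X) := ⋃ i, (fun y : Fin H → X => y i) ⁻¹' S i with hBad_def
  have hBadMeas : MeasurableSet Bad :=
    MeasurableSet.iUnion fun i => (measurable_pi_apply i) (hSmeas i)
  set G : (Fin H → X) → ℝ := fun y => ∏ i, g i (y i) with hG_def
  have hGmeas : Measurable G :=
    Finset.measurable_prod _ fun i _ => (hgmeas i).comp (measurable_pi_apply i)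
  have hKnonneg : ∀ i, 0 ≤ K i := fun i => ENNReal.toReal_nonneg
  set Kp : ℝ := ∏ i, K i with hKp_def
  have hKpnonneg : 0 ≤ Kp := Finset.prod_nonneg fun i _ => hKnonneg i
  have hGoodPt : ∀ y ∉ Bad, F y = G y ∧ |G y| ≤ Kp := by
    intro y hy
    have h1 : ∀ i, f i (y i) = g i (y i) ∧ |f i (y i)| ≤ K i := by
      intro i
      by_contra hcon
      exact hy (Set.mem_iUnion.2 ⟨i, hSsub i hcon⟩)
    constructor
    · rw [hF]; exact Finset.prod_congr rfl fun i _ => (h1 i).1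
    · rw [Finset.abs_prod]
      exact Finset.prod_le_prod (fun i _ => abs_nonneg _)
        (fun i _ => by rw [← (h1 i).1]; exact (h1 i).2)
  -- diagonal measure null
  have hdiagmeas : Measurable (fun x : X => fun _ : Fin H => x) :=
    measurable_pi_lambda _ fun _ => measurable_id
  have keyA : ∀ k : ℤ, μΔ (⇑(Φ ^ k) ⁻¹' Bad) = 0 := by
    intro k
    rw [hμΔ, Measure.map_apply hdiagmeas ((hΦmeas k) hBadMeas)]
    have hset : (fun x : X => fun _ : Fin H => x) ⁻¹' (⇑(Φ ^ k) ⁻¹' Bad) =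
        ⋃ i, ⇑((T i) ^ k) ⁻¹' S i := by
      ext x
      simp only [Set.mem_preimage, hBad_def, Set.mem_iUnion]
      constructor
      · rintro ⟨i, hi⟩
        exact ⟨i, by rwa [← hpow k (fun _ => x) i]⟩
      · rintro ⟨i, hi⟩
        exact ⟨i, by rwa [hpow k (fun _ => x) i]⟩
    rw [hset]
    refine measure_iUnion_null fun i => ?_
    rw [(hTk i k).measure_preimage (hSmeas i).nullMeasurableSet]
    exact hSnull i
  have hνnull : ∀ n : ℤ, ν (⇑(Φ ^ n) ⁻¹' Bad) = 0 := by
    intro n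
    rw [hν]
    simp only [Measure.smul_apply, smul_eq_mul]
    rw [Measure.sum_apply _ ((hΦmeas n) hBadMeas)]
    have hterm : ∀ m : ℤ,
        (((2 : ℝ≥0∞) ^ m.natAbs)⁻¹ • Measure.map (⇑(Φ ^ m)) μΔ) (⇑(Φ ^ n) ⁻¹' Bad) = 0 := by
      intro m
      rw [Measure.smul_apply, Measure.map_apply (hΦmeas m) ((hΦmeas n) hBadMeas)]
      have hset : ⇑(Φ ^ m) ⁻¹' (⇑(Φ ^ n) ⁻¹' Bad) = ⇑(Φ ^ (n + m)) ⁻¹' Bad := by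
        ext y
        simp only [Set.mem_preimage]
        have : (Φ ^ (n + m)) y = (Φ ^ n) ((Φ ^ m) y) := by rw [zpow_add]; rfl
        rw [this]
      rw [hset, keyA (n + m), smul_eq_mul, mul_zero]
    simp only [hterm, tsum_zero, mul_zero]
  have hΦmeasN : ∀ n : ℕ, Measurable ⇑(Φ ^ n) := by
    intro n
    have := hΦmeas (n : ℤ)
    rwa [zpow_natCast] at this
  have hGoodAE : ∀ᵐ z ∂ν, ∀ n : ℕ, (Φ ^ n) z ∉ Bad := by
    rw [ae_all_iff]
    intro n
    have h0 := hνnull (n : ℤ)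
    rw [zpow_natCast] at h0
    simp [ae_iff]; exact h0
  -- the essential sup bound
  set c : ℝ := (⨆ N : ℕ, eLpNorm (fun z => ∑ n ∈ Finset.Icc 1 N, F ((Φ ^ n) z)) ⊤ ν).toReal
    with hc_def
  have hcnonneg : 0 ≤ c := ENNReal.toReal_nonneg
  have hboundAE : ∀ᵐ z ∂ν, ∀ N : ℕ, |∑ n ∈ Finset.Icc 1 N, F ((Φ ^ n) z)| ≤ c := by
    rw [ae_all_iff]
    intro N
    have h1 : ∀ᵐ z ∂ν, (‖∑ n ∈ Finset.Icc 1 N, F ((Φ ^ n) z)‖₊ : ℝ≥0∞) ≤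
        eLpNormEssSup (fun z => ∑ n ∈ Finset.Icc 1 N, F ((Φ ^ n) z)) ν := ae_le_eLpNormEssSup
    refine h1.mono fun z hz => ?_
    have h2 : (‖∑ n ∈ Finset.Icc 1 N, F ((Φ ^ n) z)‖₊ : ℝ≥0∞) ≤
        (⨆ N : ℕ, eLpNorm (fun z => ∑ n ∈ Finset.Icc 1 N, F ((Φ ^ n) z)) ⊤ ν) := by
      refine hz.trans ?_
      rw [← eLpNorm_exponent_top]
      exact le_iSup (fun N : ℕ => eLpNorm (fun z => ∑ n ∈ Finset.Icc 1 N, F ((Φ ^ n) z)) ⊤ ν) N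
    calc |∑ n ∈ Finset.Icc 1 N, F ((Φ ^ n) z)|
        = ((‖∑ n ∈ Finset.Icc 1 N, F ((Φ ^ n) z)‖₊ : ℝ≥0∞)).toReal := by
          simp [Real.norm_eq_abs]
      _ ≤ c := ENNReal.toReal_mono hsup.ne h2
  -- definitions of U, B, V
  set U : ℕ → (Fin H → X) → ℝ := fun k z => ∑ n ∈ Finset.range k, G ((Φ ^ n) z) with hU_def
  set B : ℕ → (Fin H → X) → ℝ :=
    fun N z => (N : ℝ)⁻¹ * ∑ k ∈ Finset.range N, U (k + 1) z with hB_def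
  have hBmeas : ∀ N, Measurable (B N) := by
    intro N
    apply Measurable.const_mul
    apply Finset.measurable_sum
    intro k _
    apply Finset.measurable_sum
    intro n _
    exact hGmeas.comp (hΦmeasN n)
  set V : (Fin H → X) → ℝ := fun z => limsup (fun N => B N z) atTop with hV_def
  have hVmeas : Measurable V := Measurable.limsup hBmeas
  -- pointwise analysis on the good event
  have hmain : ∀ z, (∀ n : ℕ, (Φ ^ n) z ∉ Bad) →
      (∀ N : ℕ, |∑ n ∈ Finset.Icc 1 N, F ((Φ ^ n) z)| ≤ c) →
      (|V z| ≤ Kp + c ∧ F z = V z - V (Φ z)) := by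
    intro z hzgood hzbound
    set a : ℕ → ℝ := fun n => G ((Φ ^ n) z) with ha_def
    have haF : ∀ n, F ((Φ ^ n) z) = a n := fun n => (hGoodPt _ (hzgood n)).1
    have ha0 : |a 0| ≤ Kp := (hGoodPt _ (hzgood 0)).2
    set w : ℕ → ℝ := fun k => ∑ n ∈ Finset.Icc 1 k, a n with hw_def
    have hwbound : ∀ k, |w k| ≤ c := by
      intro k
      have := hzbound k
      rwa [Finset.sum_congr rfl fun n _ => haF n] at this
    -- U as function of a
    have hUz : ∀ k, U k z = ∑ n ∈ Finset.range k, a n := fun k => rfl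
    have hUsplit : ∀ k, U (k + 1) z = a 0 + w k := by
      intro k
      rw [hUz, Finset.sum_range_succ', hw_def]
      simp only [aux_sum_Icc_one a k]
      ring
    -- U at Φ z
    have hUΦ : ∀ k, U k (Φ z) = w k := by
      intro k
      rw [hw_def]
      simp only [aux_sum_Icc_one a k]
      apply Finset.sum_congr rfl
      intro n _
      have : (Φ ^ (n + 1)) z = (Φ ^ n) (Φ z) := by rw [pow_succ]; rfl
      simp only [ha_def, ← this]
    -- bound on U (k+1) z
    have hUbound : ∀ k, |U (k + 1) z| ≤ Kp + c := by
      intro k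
      rw [hUsplit k]
      exact (abs_add_le _ _).trans (add_le_add ha0 (hwbound k))
    -- bound on B N z
    have hBbound : ∀ N, |B N z| ≤ Kp + c := by
      intro N
      rcases Nat.eq_zero_or_pos N with hN | hN
      · simp [hB_def, hN]; positivity
      · rw [hB_def]
        rw [abs_mul, abs_inv, Nat.abs_cast]
        have h1 : |∑ k ∈ Finset.range N, U (k + 1) z| ≤ (N : ℝ) * (Kp + c) := by
          refine (Finset.abs_sum_le_sum_abs _ _).trans ?_
          calc ∑ k ∈ Finset.range N, |U (k + 1) z| ≤ ∑ _k ∈ Finset.range N, (Kp + c) :=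
                Finset.sum_le_sum fun k _ => hUbound k
            _ = (N : ℝ) * (Kp + c) := by
                rw [Finset.sum_const, Finset.card_range, nsmul_eq_mul]
        have hNpos : (0 : ℝ) < N := by exact_mod_cast hN
        calc (N : ℝ)⁻¹ * |∑ k ∈ Finset.range N, U (k + 1) z|
            ≤ (N : ℝ)⁻¹ * ((N : ℝ) * (Kp + c)) := by
              apply mul_le_mul_of_nonneg_left h1 (by positivity)
          _ = Kp + c := by field_simp
    -- B at Φ z
    have hBΦ : ∀ N : ℕ, 1 ≤ N →
        B N (Φ z) = B N z + (N : ℝ)⁻¹ * w N + (-(a 0)) := by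
      intro N hN
      have hNpos : (0 : ℝ) < N := by exact_mod_cast hN
      have hw0 : w 0 = 0 := by simp [hw_def]
      have h1 : ∑ k ∈ Finset.range N, U (k + 1) (Φ z)
          = ∑ k ∈ Finset.range N, U (k + 1) z + w N - (N : ℝ) * a 0 := by
        have e2 : ∀ k, U (k + 1) (Φ z) = (U (k + 1) z - a 0) + (w (k + 1) - w k) := by
          intro k
          rw [hUΦ (k + 1), hUsplit k]; ring
        calc ∑ k ∈ Finset.range N, U (k + 1) (Φ z)
            = ∑ k ∈ Finset.range N, ((U (k + 1) z - a 0) + (w (k + 1) - w k)) :=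
              Finset.sum_congr rfl fun k _ => e2 k
          _ = (∑ k ∈ Finset.range N, (U (k + 1) z - a 0))
              + ∑ k ∈ Finset.range N, (w (k + 1) - w k) := Finset.sum_add_distrib
          _ = (∑ k ∈ Finset.range N, U (k + 1) z - (N : ℝ) * a 0) + (w N - w 0) := by
              rw [Finset.sum_sub_distrib, Finset.sum_const, Finset.card_range,
                nsmul_eq_mul, Finset.sum_range_sub w]
          _ = ∑ k ∈ Finset.range N, U (k + 1) z + w N - (N : ℝ) * a 0 := by
              rw [hw0]; ring
      have hNne : (N : ℝ) ≠ 0 := ne_of_gt hNpos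
      simp only [hB_def]
      rw [h1]
      field_simp
      ring
    -- tendsto of the error term
    set vs : ℕ → ℝ := fun N => (N : ℝ)⁻¹ * w N with hvs_def
    have hvsb : ∀ N, |vs N| ≤ (N : ℝ)⁻¹ * c := by
      intro N
      rw [hvs_def, abs_mul, abs_inv, Nat.abs_cast]
      exact mul_le_mul_of_nonneg_left (hwbound N) (by positivity)
    have hvs0 : Tendsto vs atTop (𝓝 0) := by
      refine squeeze_zero_norm (a := fun N : ℕ => (N : ℝ)⁻¹ * c)
        (fun N => by simpa [Real.norm_eq_abs] using hvsb N) ?_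
      have := tendsto_inv_atTop_nhds_zero_nat.mul_const c
      simpa using this
    have hvsc : ∀ N : ℕ, |vs N| ≤ c := by
      intro N
      rcases Nat.eq_zero_or_pos N with hN | hN
      · simp [hvs_def, hN, hcnonneg]
      · refine (hvsb N).trans ?_
        have h1 : ((N : ℝ))⁻¹ ≤ 1 := by
          rw [inv_le_one_iff₀]
          right
          exact_mod_cast hN
        calc (N : ℝ)⁻¹ * c ≤ 1 * c := mul_le_mul_of_nonneg_right h1 hcnonneg
          _ = c := one_mul c
    -- limsup computation
    have hbu : ∀ᶠ N in atTop, |B N z| ≤ Kp + c := Eventually.of_forall hBbound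
    have hVz : |V z| ≤ Kp + c := aux_abs_limsup_le hbu
    have hsum_b : ∀ N, |B N z + vs N| ≤ Kp + c + c := fun N =>
      (abs_add_le _ _).trans (add_le_add (hBbound N) (hvsc N))
    have hVΦ : V (Φ z) = V z + (-(a 0)) := by
      have hcong : ∀ᶠ N in atTop, B N (Φ z) = (fun N => (B N z + vs N) + (-(a 0))) N := by
        filter_upwards [eventually_ge_atTop 1] with N hN
        simpa [hvs_def] using hBΦ N hN
      have h1 : V (Φ z) = limsup (fun N => (B N z + vs N) + (-(a 0))) atTop := by
        rw [hV_def]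
        exact limsup_congr hcong
      rw [h1]
      rw [limsup_add_const atTop (fun N => B N z + vs N) (-(a 0))
        (Filter.isBoundedUnder_of ⟨Kp + c + c, fun N => (abs_le.1 (hsum_b N)).2⟩)
        (IsBoundedUnder.isCoboundedUnder_le
          (Filter.isBoundedUnder_of ⟨-(Kp + c + c), fun N => (abs_le.1 (hsum_b N)).1⟩))]
      congr 1
      exact aux_limsup_add_eq hbu hvs0
    have hFz : F z = a 0 := by
      have := haF 0
      simpa using this
    refine ⟨hVz, ?_⟩
    rw [hFz, hVΦ]
    ring
  -- conclusion
  refine ⟨V, ?_, ?_⟩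
  · apply memLp_top_of_bound hVmeas.aestronglyMeasurable (Kp + c)
    filter_upwards [hGoodAE, hboundAE] with z h1 h2
    simpa [Real.norm_eq_abs] using (hmain z h1 h2).1
  · filter_upwards [hGoodAE, hboundAE] with z h1 h2
    exact (hmain z h1 h2).2
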